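/- Every non-empty word y admits a unique factorisation y = x_1 x_2 ... x_k where each x_i is a Lyndon word and x_1 ≥ x_2 ≥ ... ≥ x_k in the lexicographic order. -/
import Mathlib


variable {α : Type*} [LinearOrder α] [Inhabited α]

/-- A Lyndon word: a non-empty word strictly lexicographically smaller than
all its proper non-empty suffixes. -/
def IsLyndon (w : List α) : Prop :=
  w ≠ [] ∧ ∀ v : List α, v ≠ [] → v ≠ w → v <:+ w → List.Lex (· < ·) w v

/-- `wpow x k` is the word `x` repeated `k` times. -/
def wpow (x : List α) (k : ℕ) : List α := (List.replicate k x).flatten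

/-- `infWord x` is the infinite word `x^∞` (junk value if `x = []`). -/
def infWord (x : List α) : ℕ → α := fun i => x.getD (i % x.length) default

/-- Strict lexicographic order on infinite words. -/
def InfLt (f g : ℕ → α) : Prop := ∃ n, (∀ i < n, f i = g i) ∧ f n < g n

/-- The infinite ordering `≺` on non-empty words. -/
def Prec (u v : List α) : Prop :=
  InfLt (infWord u) (infWord v) ∨ (infWord u = infWord v ∧ v.length < u.length)

/-- `u` is strongly less than `v`: they share a common prefix followed by
strictly comparable letters. -/
def StrongLt (u v : List α) : Prop :=
  ∃ (p s t : List α) (a b : α), a < b ∧ u = p ++ a :: s ∧ v = p ++ b :: t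

namespace CFLaux

lemma lt_append {u t : List α} (ht : t ≠ []) : u < u ++ t := by
  induction u with
  | nil =>
    cases t with
    | nil => exact absurd rfl ht
    | cons a t => exact List.Lex.nil
  | cons a u ih => exact List.Lex.cons ih

lemma prefix_lt {u v : List α} (h : u <+: v) (hne : u ≠ v) : u < v := by
  obtain ⟨t, rfl⟩ := h
  exact lt_append (by rintro rfl; simp at hne)

lemma prefix_le {u v : List α} (h : u <+: v) : u ≤ v := by
  rcases eq_or_ne u v with rfl | hne
  · exact le_rfl
  · exact (prefix_lt h hne).le


lemma strong_append_lt {u v x y : List α} (h : StrongLt u v) : u ++ x < v ++ y := by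
  obtain ⟨p, s, t, a, b, hab, rfl, rfl⟩ := h
  rw [List.append_assoc, List.append_assoc, List.cons_append, List.cons_append]
  exact List.Lex.append_left _ (List.Lex.rel hab) p

lemma strong_append_lt' {u v x : List α} (h : StrongLt u v) : u ++ x < v := by
  have := strong_append_lt (x := x) (y := []) h
  simpa using this

lemma lt_cases {u v : List α} (h : u < v) : (u <+: v ∧ u ≠ v) ∨ StrongLt u v := by
  have h' : List.Lex (· < ·) u v := h
  induction h' with
  | nil => exact Or.inl ⟨List.nil_prefix, by simp⟩
  | @rel a l₁ b l₂ hab => exact Or.inr ⟨[], l₁, l₂, a, b, hab, rfl, rfl⟩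
  | @cons a l₁ l₂ hl ih =>
    rcases ih hl with ⟨⟨t, rfl⟩, hne⟩ | ⟨p, s, t, x, y, hxy, rfl, rfl⟩
    · exact Or.inl ⟨⟨t, rfl⟩, by simpa using hne⟩
    · exact Or.inr ⟨a :: p, s, t, x, y, hxy, rfl, rfl⟩

lemma strongLt_of_lt_of_length_le {u v : List α} (h : u < v) (hl : v.length ≤ u.length) :
    StrongLt u v := by
  rcases lt_cases h with ⟨hp, hne⟩ | hs
  · exact absurd (hp.eq_of_length (le_antisymm hp.length_le hl)) hne
  · exact hs

lemma suffix_decomp {s u v : List α} (h : s <:+ u ++ v) :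
    s <:+ v ∨ ∃ u', u' <:+ u ∧ u' ≠ [] ∧ s = u' ++ v := by
  rcases le_or_gt s.length v.length with hl | hl
  · exact Or.inl (List.suffix_of_suffix_length_le h (List.suffix_append u v) hl)
  · have hv : v <:+ s := List.suffix_of_suffix_length_le (List.suffix_append u v) h hl.le
    obtain ⟨u', rfl⟩ := hv
    obtain ⟨t, ht⟩ := h
    have htu : t ++ u' = u := by
      have : (t ++ u') ++ v = u ++ v := by rw [List.append_assoc]; exact ht
      exact List.append_cancel_right this
    refine Or.inr ⟨u', ⟨t, htu⟩, ?_, rfl⟩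
    rintro rfl
    simp at hl

lemma isLyndon_append {u v : List α} (hu : IsLyndon u) (hv : IsLyndon v) (huv : u < v) :
    IsLyndon (u ++ v) := by
  refine ⟨by simp [hu.1], fun s hs hsne hsuf => ?_⟩
  have hufvf : u ++ v < v := by
    rcases lt_cases huv with ⟨⟨t, rfl⟩, hne⟩ | hstrong
    · have ht : t ≠ [] := by rintro rfl; simp at hne
      have htv : t ≠ u ++ t := by
        intro h
        have := congrArg List.length h
        simp at this
        exact hu.1 this
      exact List.Lex.append_left _ (hv.2 t ht htv ⟨u, rfl⟩) u
    · exact strong_append_lt' hstrong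
  show List.Lex (· < ·) (u ++ v) s
  rcases suffix_decomp hsuf with hsv | ⟨u', hu', hu'ne, rfl⟩
  · rcases eq_or_ne s v with rfl | hne
    · exact hufvf
    · exact lt_trans hufvf (hv.2 s hs hne hsv)
  · rcases eq_or_ne u' u with rfl | hne
    · exact absurd rfl hsne
    · have h1 : u < u' := hu.2 u' hu'ne hne hu'
      have h2 : StrongLt u u' := strongLt_of_lt_of_length_le h1 hu'.length_le
      exact strong_append_lt h2

lemma isLyndon_singleton (c : α) : IsLyndon [c] := by
  refine ⟨by simp, fun v hv hne hsuf => ?_⟩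
  rcases List.suffix_cons_iff.mp hsuf with h | h
  · exact absurd h hne
  · exact absurd (List.suffix_nil.mp h) hv

lemma exists_bad_pair {β : Type*} {R : β → β → Prop} :
    ∀ (l : List β), ¬ l.Chain' R → ∃ P a b Q, l = P ++ a :: b :: Q ∧ ¬ R a b
  | [], h => absurd List.isChain_nil h
  | [x], h => absurd (List.isChain_singleton x) h
  | x :: y :: t, h => by
    by_cases hxy : R x y
    · obtain ⟨P, a, b, Q, hP, hR⟩ :=
        exists_bad_pair (y :: t) (fun hc => h (List.isChain_cons_cons.mpr ⟨hxy, hc⟩))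
      exact ⟨x :: P, a, b, Q, by rw [List.cons_append, hP], hR⟩
    · exact ⟨[], x, y, t, rfl, hxy⟩

lemma exists_merge : ∀ (n : ℕ) (L : List (List α)), L.length ≤ n → (∀ x ∈ L, IsLyndon x) →
    ∃ M : List (List α), M.flatten = L.flatten ∧ (∀ x ∈ M, IsLyndon x) ∧
      M.Chain' (fun a b => b = a ∨ List.Lex (· < ·) b a) := by
  intro n
  induction n with
  | zero =>
    intro L hL _
    have : L = [] := List.length_eq_zero_iff.mp (Nat.le_zero.mp hL)
    subst this
    exact ⟨[], rfl, by simp, List.isChain_nil⟩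
  | succ n ih =>
    intro L hL hall
    by_cases hc : L.Chain' (fun a b => b = a ∨ List.Lex (· < ·) b a)
    · exact ⟨L, rfl, hall, hc⟩
    · obtain ⟨P, a, b, Q, rfl, hR⟩ := exists_bad_pair L hc
      have hab : a < b := by
        rcases lt_trichotomy a b with h | h | h
        · exact h
        · exact absurd (Or.inl h.symm) hR
        · exact absurd (Or.inr h) hR
      have hm : IsLyndon (a ++ b) :=
        isLyndon_append (hall a (by simp)) (hall b (by simp)) hab
      obtain ⟨M, h1, h2, h3⟩ := ih (P ++ (a ++ b) :: Q)
        (by simp at hL ⊢; omega)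
        (by
          intro x hx
          simp only [List.mem_append, List.mem_cons] at hx
          rcases hx with hx | hx | hx
          · exact hall x (by simp [hx])
          · exact hx ▸ hm
          · exact hall x (by simp [hx]))
      exact ⟨M, by rw [h1]; simp, h2, h3⟩

lemma prefix_flatten : ∀ (L : List (List α)) (p : List α), p <+: L.flatten →
    (∃ L₁ L₂, L = L₁ ++ L₂ ∧ p = L₁.flatten) ∨
    (∃ L₁ x L₂ u, L = L₁ ++ x :: L₂ ∧ u <+: x ∧ u ≠ [] ∧ u ≠ x ∧ p = L₁.flatten ++ u)
  | [], p, h => by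
    left
    exact ⟨[], [], rfl, by simpa using List.prefix_nil.mp (by simpa using h)⟩
  | x :: L, p, h => by
    rw [List.flatten_cons] at h
    rcases le_or_gt p.length x.length with hl | hl
    · have hpx : p <+: x := List.prefix_of_prefix_length_le h (List.prefix_append x _) hl
      rcases eq_or_ne p x with rfl | hne
      · exact Or.inl ⟨[p], L, rfl, by simp⟩
      rcases eq_or_ne p [] with rfl | hpe
      · exact Or.inl ⟨[], x :: L, rfl, rfl⟩
      · exact Or.inr ⟨[], x, L, p, rfl, hpx, hpe, hne, by simp⟩
    · have hxp : x <+: p :=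
        List.prefix_of_prefix_length_le (List.prefix_append x _) h hl.le
      obtain ⟨q, rfl⟩ := hxp
      have hq : q <+: L.flatten := (List.prefix_append_right_inj x).mp h
      rcases prefix_flatten L q hq with ⟨L₁, L₂, rfl, rfl⟩ | ⟨L₁, z, L₂, u, rfl, h1, h2, h3, rfl⟩
      · exact Or.inl ⟨x :: L₁, L₂, rfl, by simp⟩
      · exact Or.inr ⟨x :: L₁, z, L₂, u, rfl, h1, h2, h3, by simp⟩

lemma key {L : List (List α)} {a b : List α}
    (hall : ∀ x ∈ a :: L, IsLyndon x)
    (hch : (a :: L).Chain' (fun u v => v = u ∨ List.Lex (· < ·) v u))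
    (hb : IsLyndon b) (hpre : b <+: (a :: L).flatten) (hab : a <+: b) (hne : a ≠ b) :
    False := by
  have ha := hall a (by simp)
  haveI : IsTrans (List α) (fun u v : List α => v ≤ u) :=
    ⟨fun _ _ _ h1 h2 => le_trans h2 h1⟩
  have hp : (a :: L).Pairwise (fun u v : List α => v ≤ u) :=
    List.isChain_iff_pairwise.mp
      (hch.imp fun u v h => h.elim le_of_eq (fun h' => le_of_lt h'))
  have hle : ∀ x ∈ L, x ≤ a := fun x hx => (List.pairwise_cons.mp hp).1 x hx
  have halt : a < b := prefix_lt hab hne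
  rcases prefix_flatten (a :: L) b hpre with
    ⟨L₁, L₂, hLL, rfl⟩ | ⟨L₁, x, L₂, u, hLL, hux, hune, _, rfl⟩
  · -- b = L₁.flatten
    cases L₁ with
    | nil => exact hb.1 rfl
    | cons c L₁' =>
      rw [List.cons_append] at hLL
      obtain ⟨h1, h2⟩ := List.cons.inj hLL
      subst h1
      have hL₁' : L₁' ≠ [] := by
        rintro rfl
        exact hne (by simp)
      have hzmem : L₁'.getLast hL₁' ∈ L := by
        rw [h2]
        exact List.mem_append_left _ (List.getLast_mem hL₁')
      have hzlyn : IsLyndon (L₁'.getLast hL₁') := hall _ (by simp [hzmem])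
      have hzeq : (a :: L₁'.dropLast).flatten ++ L₁'.getLast hL₁' = (a :: L₁').flatten := by
        conv_rhs => rw [← List.dropLast_append_getLast hL₁']
        simp
      have hzsuf : L₁'.getLast hL₁' <:+ (a :: L₁').flatten := ⟨_, hzeq⟩
      have hlen : (L₁'.getLast hL₁').length < ((a :: L₁') : List (List α)).flatten.length := by
        have := congrArg List.length hzeq
        simp at this ⊢
        have hane : 0 < a.length := List.length_pos_iff.mpr ha.1
        omega
      have hzneb : L₁'.getLast hL₁' ≠ (a :: L₁').flatten := by
        intro h
        rw [h] at hlen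
        exact lt_irrefl _ hlen
      have hblt : (a :: L₁').flatten < L₁'.getLast hL₁' :=
        hb.2 _ hzlyn.1 hzneb hzsuf
      have : a < a := lt_of_lt_of_le (lt_trans halt hblt) (hle _ hzmem)
      exact lt_irrefl _ this
  · -- b = L₁.flatten ++ u with u proper nonempty prefix of x
    cases L₁ with
    | nil =>
      obtain ⟨h1, h2⟩ := List.cons.inj hLL
      subst h1
      have hbu : ([] : List (List α)).flatten ++ u = u := by simp
      rw [hbu] at hab hne
      have hba : u <+: a := hux
      have : a = u := hab.eq_of_length (le_antisymm hab.length_le hba.length_le)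
      exact hne this
    | cons c L₁' =>
      rw [List.cons_append] at hLL
      obtain ⟨h1, h2⟩ := List.cons.inj hLL
      subst h1
      have hxmem : x ∈ L := by
        rw [h2]
        exact List.mem_append_right _ (by simp)
      have husuf : u <:+ (a :: L₁').flatten ++ u := ⟨_, rfl⟩
      have hlen : u.length < ((a :: L₁').flatten ++ u).length := by
        have := List.length_pos_iff.mpr ha.1
        simp
        omega
      have huneb : u ≠ (a :: L₁').flatten ++ u := by
        intro h
        rw [← h] at hlen
        exact lt_irrefl _ hlen
      have hblt : (a :: L₁').flatten ++ u < u := hb.2 u hune huneb husuf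
      have hux' : u ≤ x := prefix_le hux
      have hxa : x ≤ a := hle x hxmem
      exact absurd (lt_trans (lt_of_lt_of_le hblt (hux'.trans hxa)) halt)
        (lt_irrefl _)

lemma flatten_nonnil_ne_nil {L : List (List α)} (hL : ∀ x ∈ L, IsLyndon x) (h : L.flatten = []) :
    L = [] := by
  cases L with
  | nil => rfl
  | cons a L =>
    exfalso
    rw [List.flatten_cons, List.append_eq_nil_iff] at h
    exact (hL a (by simp)).1 h.1

lemma unique : ∀ (L M : List (List α)), (∀ x ∈ L, IsLyndon x) → (∀ x ∈ M, IsLyndon x) →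
    L.Chain' (fun a b => b = a ∨ List.Lex (· < ·) b a) →
    M.Chain' (fun a b => b = a ∨ List.Lex (· < ·) b a) →
    L.flatten = M.flatten → L = M := by
  intro L
  induction L with
  | nil =>
    intro M _ hM _ _ h
    exact (flatten_nonnil_ne_nil hM h.symm).symm
  | cons a L ih =>
    intro M hL hM hcL hcM h
    cases M with
    | nil =>
      exact absurd (flatten_nonnil_ne_nil hL h) (by simp)
    | cons b M' =>
      have hpa : a <+: (b :: M').flatten := ⟨L.flatten, by simpa using h⟩
      have hpb : b <+: (a :: L).flatten := ⟨M'.flatten, by simpa using h.symm⟩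
      have hab : a = b := by
        by_contra hne
        rcases le_total a.length b.length with hl | hl
        · have hpb' : b <+: (b :: M').flatten := ⟨M'.flatten, by simp⟩
          have hab' : a <+: b := List.prefix_of_prefix_length_le hpa hpb' hl
          exact key hL hcL (hM b (by simp)) hpb hab' hne
        · have hpa' : a <+: (a :: L).flatten := ⟨L.flatten, by simp⟩
          have hba' : b <+: a := List.prefix_of_prefix_length_le hpb hpa' hl
          exact key hM hcM (hL a (by simp)) hpa hba' (Ne.symm hne)
      subst hab
      have hflat : L.flatten = M'.flatten := by
        have h' : a ++ L.flatten = a ++ M'.flatten := by simpa using h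
        exact List.append_cancel_left h'
      rw [ih M' (fun x hx => hL x (List.mem_cons_of_mem _ hx))
        (fun x hx => hM x (List.mem_cons_of_mem _ hx)) hcL.tail hcM.tail hflat]

lemma flatten_map_singleton (y : List α) : (y.map fun c => [c]).flatten = y := by
  induction y with
  | nil => rfl
  | cons a t ih => simp [ih]

end CFLaux

/-- Chen–Fox–Lyndon: every non-empty word admits a unique factorisation into
a lexicographically non-increasing sequence of Lyndon words. -/
theorem lyndon_factorisation_exists_unique {α : Type*} [LinearOrder α] [Inhabited α]
    (y : List α) (hy : y ≠ []) :
    ∃! L : List (List α),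
      L.flatten = y ∧ (∀ x ∈ L, IsLyndon x) ∧
      List.Chain' (fun a b => b = a ∨ List.Lex (· < ·) b a) L := by
  obtain ⟨M, h1, h2, h3⟩ := CFLaux.exists_merge y.length (y.map fun c => [c])
    (by simp)
    (by
      intro x hx
      simp only [List.mem_map] at hx
      obtain ⟨c, _, rfl⟩ := hx
      exact CFLaux.isLyndon_singleton c)
  refine ⟨M, ⟨h1.trans (CFLaux.flatten_map_singleton y), h2, h3⟩, ?_⟩
  rintro N ⟨hN1, hN2, hN3⟩
  exact CFLaux.unique N M hN2 h2 hN3 h3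
    (by rw [hN1, h1, CFLaux.flatten_map_singleton])
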